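/- arXiv:2004.10873 — 7 statements merged into one kernel-verified Lean document; each statement's English description precedes it below -/
import Mathlib

section
/- Let G = (A ∪ B, E) be bipartite and H be obtained from G by adding vertices u, v with N_H(u) = A and N_H(v) = B. If ⟨I₁,…,I_r⟩ is a sequence of independent sets of G such that for each i, |I_i| = |I_{i+1}| and |I_i \ I_{i+1}| = |I_{i+1} \ I_i| = 1 (a TJ-reconfiguration sequence of independent sets), then ⟨V(G)\I₁, …, V(G)\I_r⟩ is a TJ-reconfiguration sequence of uv-separators in H, i.e., each V(G)\I_i is a uv-separator and consecutive sets have equal size and symmetric difference of size two. -/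
/-- `S` is a `uv`-separator in `G`. -/
def IsSep {V : Type*} (G : SimpleGraph V) (u v : V) (S : Set V) : Prop :=
  u ∉ S ∧ v ∉ S ∧ ∀ p : G.Walk u v, ∃ w ∈ S, w ∈ p.support

/-- `I` is an independent set of `G`. -/
def IsIndep {V : Type*} (G : SimpleGraph V) (I : Set V) : Prop :=
  ∀ x ∈ I, ∀ y ∈ I, ¬ G.Adj x y

/-- A TJ-reconfiguration sequence of independent sets of the bipartite graph
`G = H[A ∪ B]` is turned into a TJ-reconfiguration sequence of
`uv`-separators of `H` by complementation. -/
theorem stmt2 {V : Type*} [Fintype V] (H : SimpleGraph V) (A B : Set V) (u v : V)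
    (hdisj : Disjoint A B) (hu : u ∉ A ∪ B) (hv : v ∉ A ∪ B) (huv : u ≠ v)
    (hcover : insert u (insert v (A ∪ B)) = Set.univ)
    (hNu : H.neighborSet u = A) (hNv : H.neighborSet v = B)
    (hbip : ∀ x y, x ∈ A ∪ B → y ∈ A ∪ B → H.Adj x y →
      (x ∈ A ∧ y ∈ B) ∨ (x ∈ B ∧ y ∈ A))
    (r : ℕ) (I : ℕ → Set V)
    (hIsub : ∀ i < r, I i ⊆ A ∪ B)
    (hindep : ∀ i < r, IsIndep H (I i))
    (hTJ : ∀ i, i + 1 < r → (I i).ncard = (I (i + 1)).ncard ∧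
      (I i \ I (i + 1)).ncard = 1 ∧ (I (i + 1) \ I i).ncard = 1) :
    (∀ i < r, IsSep H u v ((A ∪ B) \ I i)) ∧
    (∀ i, i + 1 < r →
      ((A ∪ B) \ I i).ncard = ((A ∪ B) \ I (i + 1)).ncard ∧
      (((A ∪ B) \ I i) \ ((A ∪ B) \ I (i + 1))).ncard = 1 ∧
      (((A ∪ B) \ I (i + 1)) \ ((A ∪ B) \ I i)).ncard = 1) := by
  constructor
  · intro i hi
    refine ⟨fun h => hu h.1, fun h => hv h.1, ?_⟩
    have key : ∀ n (p : H.Walk u v), p.length = n →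
        ∃ w ∈ (A ∪ B) \ I i, w ∈ p.support := by
      intro n
      induction n using Nat.strong_induction_on with
      | _ n ih =>
        intro p hp
        obtain ⟨w, hadj, q, rfl⟩ := SimpleGraph.Walk.exists_eq_cons_of_ne huv p
        have hwA : w ∈ A := by rw [← hNu]; exact hadj
        by_cases hwI : w ∈ I i
        · have hwv : w ≠ v := fun h => hv (h ▸ Or.inl hwA)
          obtain ⟨z, hadj2, q2, rfl⟩ := SimpleGraph.Walk.exists_eq_cons_of_ne hwv q
          have hzv : z ≠ v := by
            intro h
            subst h
            have : w ∈ B := by rw [← hNv]; exact hadj2.symm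
            exact hdisj.ne_of_mem hwA this rfl
          have hz : z = u ∨ z ∈ A ∪ B := by
            have : z ∈ insert u (insert v (A ∪ B)) := by rw [hcover]; trivial
            rcases this with h | h | h
            · exact Or.inl h
            · exact absurd h hzv
            · exact Or.inr h
          rcases hz with rfl | hzAB
          · have hlt : q2.length < n := by
              rw [← hp]; simp [SimpleGraph.Walk.length_cons]
            obtain ⟨x, hx, hxs⟩ := ih q2.length hlt q2 rfl
            exact ⟨x, hx, by simp [SimpleGraph.Walk.support_cons]; tauto⟩
          · have hzI : z ∉ I i := fun hzI =>
              hindep i hi w hwI z hzI hadj2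
            exact ⟨z, ⟨hzAB, hzI⟩, by simp [SimpleGraph.Walk.support_cons]⟩
        · exact ⟨w, ⟨Or.inl hwA, hwI⟩, by simp [SimpleGraph.Walk.support_cons]⟩
    intro p
    exact key p.length p rfl
  · intro i hi
    have h1 := hIsub i (Nat.lt_of_succ_lt hi)
    have h2 := hIsub (i + 1) hi
    obtain ⟨hc, hd1, hd2⟩ := hTJ i hi
    have e1 : ((A ∪ B) \ I i) \ ((A ∪ B) \ I (i + 1)) = I (i + 1) \ I i := by
      ext x
      constructor
      · rintro ⟨⟨hxAB, hxI⟩, hx2⟩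
        refine ⟨?_, hxI⟩
        by_contra h
        exact hx2 ⟨hxAB, h⟩
      · rintro ⟨hx1, hx2⟩
        exact ⟨⟨h2 hx1, hx2⟩, fun h => h.2 hx1⟩
    have e2 : ((A ∪ B) \ I (i + 1)) \ ((A ∪ B) \ I i) = I i \ I (i + 1) := by
      ext x
      constructor
      · rintro ⟨⟨hxAB, hxI⟩, hx2⟩
        refine ⟨?_, hxI⟩
        by_contra h
        exact hx2 ⟨hxAB, h⟩
      · rintro ⟨hx1, hx2⟩
        exact ⟨⟨h1 hx1, hx2⟩, fun h => h.2 hx1⟩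
    refine ⟨?_, ?_, ?_⟩
    · rw [Set.ncard_diff h1 (I i).toFinite, Set.ncard_diff h2 (I (i+1)).toFinite, hc]
    · rw [e1, hd2]
    · rw [e2, hd1]
end

section
/- Let G be a connected graph that is not complete and suppose G has a universal vertex v. If G is {3P₁, diamond}-free (G contains no independent set of size 3 and no induced diamond), then G is the union of two cliques whose intersection is {v}; in particular v is a cut vertex and every other vertex lies in exactly one of the two cliques. -/
/-- `G` has no independent set of size 3. -/
def ThreeP1Free {V : Type*} (G : SimpleGraph V) : Prop :=
  ∀ a b c : V, a ≠ b → a ≠ c → b ≠ c → G.Adj a b ∨ G.Adj a c ∨ G.Adj b c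

/-- `G` has no induced diamond (`K₄` minus an edge). -/
def DiamondFree {V : Type*} (G : SimpleGraph V) : Prop :=
  ¬ ∃ a b c d : V, a ≠ b ∧ a ≠ c ∧ a ≠ d ∧ b ≠ c ∧ b ≠ d ∧ c ≠ d ∧
      G.Adj a b ∧ G.Adj a c ∧ G.Adj a d ∧ G.Adj b c ∧ G.Adj b d ∧ ¬ G.Adj c d

/-- A connected, non-complete, `{3P₁, diamond}`-free graph with a universal
vertex `v` is the union of two cliques meeting exactly in `v`, and `v` is a
cut vertex. -/
theorem stmt5 {V : Type*} (G : SimpleGraph V) (hconn : G.Connected)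
    (hnotcomplete : ∃ a b : V, a ≠ b ∧ ¬ G.Adj a b)
    (v : V) (huniv : ∀ x, x ≠ v → G.Adj v x)
    (h3 : ThreeP1Free G) (hd : DiamondFree G) :
    ∃ Q₁ Q₂ : Set V, G.IsClique Q₁ ∧ G.IsClique Q₂ ∧ Q₁ ∪ Q₂ = Set.univ ∧
      Q₁ ∩ Q₂ = {v} ∧
      ∃ a b : V, a ≠ v ∧ b ≠ v ∧ a ≠ b ∧ ∀ p : G.Walk a b, v ∈ p.support := by
  obtain ⟨a, b, hab, hnadj⟩ := hnotcomplete
  have hav : a ≠ v := by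
    rintro rfl
    exact hnadj (huniv b (Ne.symm hab))
  have hbv : b ≠ v := by
    rintro rfl
    exact hnadj (huniv a hab).symm
  set Q₁ : Set V := {x | x = v ∨ x = a ∨ G.Adj a x} with hQ₁
  set Q₂ : Set V := {x | x = v ∨ x = b ∨ G.Adj b x} with hQ₂
  -- no common neighbor of a and b other than v
  have key1 : ∀ x : V, x ≠ v → G.Adj a x → G.Adj b x → False := by
    intro x hxv hax hbx
    exact hd ⟨v, x, a, b, Ne.symm hxv, Ne.symm hav, Ne.symm hbv,
      hax.ne', hbx.ne', hab, huniv x hxv, huniv a hav, huniv b hbv,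
      hax.symm, hbx.symm, hnadj⟩
  have hclique : ∀ c : V, c ≠ v → G.IsClique {x | x = v ∨ x = c ∨ G.Adj c x} := by
    intro c hcv x hx y hy hxy
    by_cases hxv : x = v
    · subst hxv; exact huniv y (Ne.symm hxy)
    · by_cases hyv : y = v
      · subst hyv; exact (huniv x hxv).symm
      · rcases hx with rfl | rfl | hax
        · exact absurd rfl hxv
        · rcases hy with rfl | rfl | hay
          · exact absurd rfl hyv
          · exact absurd rfl hxy
          · exact hay
        · rcases hy with rfl | rfl | hay
          · exact absurd rfl hyv
          · exact hax.symm
          · by_contra hxy'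
            exact hd ⟨v, c, x, y, Ne.symm hcv, Ne.symm (fun h => hxv h),
              Ne.symm (fun h => hyv h), hax.ne, hay.ne, hxy,
              huniv c hcv, huniv x hxv, huniv y hyv, hax, hay, hxy'⟩
  have hcl1 : G.IsClique Q₁ := hclique a hav
  have hcl2 : G.IsClique Q₂ := hclique b hbv
  have hun : Q₁ ∪ Q₂ = Set.univ := by
    ext x
    simp only [Set.mem_union, Set.mem_univ, iff_true, hQ₁, hQ₂, Set.mem_setOf_eq]
    by_cases hxv : x = v
    · exact Or.inl (Or.inl hxv)
    · by_cases hxa : x = a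
      · exact Or.inl (Or.inr (Or.inl hxa))
      · by_cases hxb : x = b
        · exact Or.inr (Or.inr (Or.inl hxb))
        · rcases h3 a b x hab (Ne.symm hxa) (Ne.symm hxb) with h | h | h
          · exact absurd h hnadj
          · exact Or.inl (Or.inr (Or.inr h))
          · exact Or.inr (Or.inr (Or.inr h))
  have hint : Q₁ ∩ Q₂ = {v} := by
    ext x
    simp only [Set.mem_inter_iff, Set.mem_singleton_iff, hQ₁, hQ₂, Set.mem_setOf_eq]
    constructor
    · rintro ⟨h1, h2⟩
      by_cases hxv : x = v
      · exact hxv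
      · exfalso
        rcases h1 with rfl | rfl | hax
        · exact hxv rfl
        · rcases h2 with rfl | rfl | hba
          · exact hxv rfl
          · exact hab rfl
          · exact hnadj hba.symm
        · rcases h2 with rfl | rfl | hbx
          · exact hxv rfl
          · exact hnadj hax
          · exact key1 x hxv hax hbx
    · rintro rfl
      exact ⟨Or.inl rfl, Or.inl rfl⟩
  -- no edges crossing between Q₁ \ {v} and Q₂ \ {v}
  have ha2 : a ∉ Q₂ := by
    intro h
    have h1 : a ∈ Q₁ := Or.inr (Or.inl rfl)
    have h2 : a ∈ Q₁ ∩ Q₂ := ⟨h1, h⟩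
    rw [hint] at h2
    exact hav h2
  have hcross : ∀ x y, x ∈ Q₁ → x ≠ v → y ∈ Q₂ → y ≠ v → ¬ G.Adj x y := by
    intro x y hx hxv hy hyv hadj
    have hnay : ¬ G.Adj a y := by
      intro hay
      rcases hy with rfl | rfl | hby
      · exact hyv rfl
      · exact hnadj hay
      · exact key1 y hyv hay hby
    have hya : y ≠ a := by rintro rfl; exact ha2 hy
    rcases hx with rfl | rfl | hax
    · exact hxv rfl
    · exact hnay hadj
    · exact hd ⟨v, x, a, y, Ne.symm hxv, Ne.symm hav, Ne.symm hyv,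
        hax.ne', hadj.ne, Ne.symm hya, huniv x hxv, huniv a hav, huniv y hyv,
        hax.symm, hadj, hnay⟩
  have hb1 : b ∉ Q₁ := by
    intro h
    have h1 : b ∈ Q₂ := Or.inr (Or.inl rfl)
    have h2 : b ∈ Q₁ ∩ Q₂ := ⟨h, h1⟩
    rw [hint] at h2
    exact hbv h2
  have haux : ∀ (x : V) (p : G.Walk x b), v ∉ p.support → x ∈ Q₁ → x ≠ v → False := by
    intro x p
    induction p with
    | nil => intro _ hx _; exact hb1 hx
    | @cons x z _ h q ih =>
      intro hs hx hxv
      have hs' : v ∉ q.support := fun hv => hs (SimpleGraph.Walk.support_cons h q ▸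
        List.mem_cons_of_mem x hv)
      have hzv : z ≠ v := fun hz => hs' (hz ▸ q.start_mem_support)
      have hzu : z ∈ Q₁ ∪ Q₂ := hun ▸ Set.mem_univ z
      rcases hzu with hz | hz
      · exact ih hab hnadj hbv hQ₂ key1 hcl2 hun hint ha2 hcross hb1 hs' hz hzv
      · exact hcross x z hx hxv hz hzv h
  refine ⟨Q₁, Q₂, hcl1, hcl2, hun, hint, a, b, hav, hbv, hab, ?_⟩
  intro p
  by_contra hv
  exact haux a p hv (Or.inr (Or.inl rfl)) hav
end

section
/- Let G be a {3P₁, diamond}-free graph and u, w non-adjacent vertices of G. Then N(u) \ N(w) induces a clique in G. -/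
/-- In a `{3P₁, diamond}`-free graph, for non-adjacent `u, w`, the set
`N(u) \ N(w)` induces a clique. -/
theorem stmt8 {V : Type*} (G : SimpleGraph V)
    (h3 : ThreeP1Free G) (hd : DiamondFree G)
    (u w : V) (huw : u ≠ w) (hna : ¬ G.Adj u w) :
    G.IsClique (G.neighborSet u \ G.neighborSet w) := by
  intro x hx y hy hxy
  obtain ⟨hxu, hxw⟩ := hx
  obtain ⟨hyu, hyw⟩ := hy
  have hxwne : x ≠ w := by rintro rfl; exact hna hxu
  have hywne : y ≠ w := by rintro rfl; exact hna hyu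
  rcases h3 x y w hxy hxwne hywne with h | h | h
  · exact h
  · exact absurd h.symm hxw
  · exact absurd h.symm hyw
end

section
/- Let G be a graph with non-adjacent vertices u,v, and suppose the family 𝐒 of minimal uv-separators of G is finite. Define the graph H on vertex set 𝐒 with an edge between minimal separators S_i and S_j whenever |S_i ∪ S_j| ≤ k. Then for uv-separators S_a, S_b of G with |S_a|, |S_b| ≤ k, there exists a k-TAR reconfiguration sequence from S_a to S_b if and only if there exist minimal uv-separators S_a' ⊆ S_a and S_b' ⊆ S_b lying in the same connected component of H. -/
/-- `S` is a minimal `uv`-separator in `G`. -/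
def MinSep {V : Type*} (G : SimpleGraph V) (u v : V) (S : Set V) : Prop :=
  IsSep G u v S ∧ ∀ T ⊂ S, ¬ IsSep G u v T

section Aux

variable {V : Type*} [Fintype V] {G : SimpleGraph V} {u v : V} {k : ℕ}

/-- Auxiliary: a `k`-TAR reconfiguration sequence exists from `A` to `B`. -/
def Tar (G : SimpleGraph V) (u v : V) (k : ℕ) (A B : Set V) : Prop :=
  ∃ (n : ℕ) (f : ℕ → Set V), f 0 = A ∧ f n = B ∧
    (∀ i ≤ n, IsSep G u v (f i) ∧ (f i).ncard ≤ k) ∧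
    (∀ i < n, (symmDiff (f i) (f (i + 1))).ncard = 1)

private lemma isSep_superset {S T : Set V} (hS : IsSep G u v S) (hST : S ⊆ T)
    (hu : u ∉ T) (hv : v ∉ T) : IsSep G u v T :=
  ⟨hu, hv, fun p => (hS.2.2 p).imp fun w hw => ⟨hST hw.1, hw.2⟩⟩

private lemma exists_minSep (S : Set V) (hS : IsSep G u v S) :
    ∃ M, M ⊆ S ∧ MinSep G u v M := by
  obtain ⟨n, hn⟩ : ∃ n, S.ncard ≤ n := ⟨S.ncard, le_rfl⟩
  induction n generalizing S with
  | zero =>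
    refine ⟨S, subset_rfl, hS, fun T hT _ => ?_⟩
    have := Set.ncard_lt_ncard hT S.toFinite
    omega
  | succ n ih =>
    by_cases h : ∀ T ⊂ S, ¬ IsSep G u v T
    · exact ⟨S, subset_rfl, hS, h⟩
    · push_neg at h
      obtain ⟨T, hTS, hT⟩ := h
      have hlt := Set.ncard_lt_ncard hTS S.toFinite
      obtain ⟨M, hMT, hM⟩ := ih T hT (by omega)
      exact ⟨M, hMT.trans hTS.subset, hM⟩

private lemma tar_refl {A : Set V} (hA : IsSep G u v A) (hk : A.ncard ≤ k) :
    Tar G u v k A A :=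
  ⟨0, fun _ => A, rfl, rfl, fun _ _ => ⟨hA, hk⟩, fun i hi => absurd hi (by omega)⟩

private lemma Tar.trans {A B C : Set V} (h1 : Tar G u v k A B) (h2 : Tar G u v k B C) :
    Tar G u v k A C := by
  obtain ⟨n, f, hf0, hfn, hfs, hfd⟩ := h1
  obtain ⟨m, g, hg0, hgm, hgs, hgd⟩ := h2
  refine ⟨n + m, fun i => if i < n then f i else g (i - n), ?_, ?_, ?_, ?_⟩
  · rcases Nat.eq_zero_or_pos n with h | h
    · subst h
      simp only [lt_irrefl, if_neg, Nat.sub_zero, if_false]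
      rw [hg0, ← hfn, hf0]
    · simp [h, hf0]
  · have h : ¬ (n + m < n) := by omega
    simp only [h, if_false]
    rw [Nat.add_sub_cancel_left, hgm]
  · intro i hi
    by_cases h : i < n
    · simp only [if_pos h]; exact hfs i h.le
    · simp only [if_neg h]; exact hgs (i - n) (by omega)
  · intro i hi
    rcases lt_trichotomy (i + 1) n with h | h | h
    · simp only [if_pos h, if_pos (by omega : i < n)]
      exact hfd i (by omega)
    · have hiltn : i < n := by omega
      have hg : g (i + 1 - n) = f (i + 1) := by
        rw [show i + 1 - n = 0 by omega, hg0, ← hfn, h]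
      simp only [if_pos hiltn, if_neg (by omega : ¬ i + 1 < n), hg]
      exact hfd i (by omega)
    · have h1 : ¬ i < n := by omega
      have h2 : ¬ i + 1 < n := by omega
      simp only [if_neg h1, if_neg h2, show i + 1 - n = (i - n) + 1 by omega]
      exact hgd (i - n) (by omega)

private lemma Tar.symm {A B : Set V} (h : Tar G u v k A B) : Tar G u v k B A := by
  obtain ⟨n, f, hf0, hfn, hfs, hfd⟩ := h
  refine ⟨n, fun i => f (n - i), by simp [hfn], by simp [hf0], fun i _ => hfs _ (by omega), ?_⟩
  intro i hi
  show (symmDiff (f (n - i)) (f (n - (i + 1)))).ncard = 1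
  have h1 : n - i = (n - (i + 1)) + 1 := by omega
  rw [h1, symmDiff_comm]
  exact hfd _ (by omega)

private lemma tar_single {A B : Set V} (hA : IsSep G u v A) (hkA : A.ncard ≤ k)
    (hB : IsSep G u v B) (hkB : B.ncard ≤ k) (h : (symmDiff A B).ncard = 1) :
    Tar G u v k A B := by
  refine ⟨1, fun i => if i = 0 then A else B, by simp, by simp, ?_, ?_⟩
  · intro i hi
    interval_cases i <;> simp [hA, hkA, hB, hkB]
  · intro i hi
    interval_cases i
    simpa using h

private lemma tar_of_subset {A B : Set V} (hB : IsSep G u v B) (hAu : u ∉ A) (hAv : v ∉ A)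
    (hBA : B ⊆ A) (hk : A.ncard ≤ k) : Tar G u v k A B := by
  obtain ⟨d, hd⟩ : ∃ d, (A \ B).ncard ≤ d := ⟨_, le_rfl⟩
  induction d generalizing A with
  | zero =>
    have he : A \ B = ∅ := by
      rcases Set.eq_empty_or_nonempty (A \ B) with he | he
      · exact he
      · have := Set.ncard_pos (Set.toFinite _) |>.mpr he
        omega
    have hAB : A = B := Set.Subset.antisymm (Set.diff_eq_empty.mp he) hBA
    rw [hAB]
    exact tar_refl hB (hAB ▸ hk)
  | succ d ih =>
    have hA : IsSep G u v A := isSep_superset hB hBA hAu hAv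
    rcases Set.eq_empty_or_nonempty (A \ B) with he | ⟨x, hx⟩
    · have hAB : A = B := Set.Subset.antisymm (Set.diff_eq_empty.mp he) hBA
      rw [hAB]
      exact tar_refl hB (hAB ▸ hk)
    · have hmem : x ∈ A \ B := hx
      obtain ⟨hxA, hxB⟩ := hx
      set A' := A \ {x} with hA'
      have hBA' : B ⊆ A' := by
        intro y hy
        refine ⟨hBA hy, ?_⟩
        simp only [Set.mem_singleton_iff]
        rintro rfl
        exact hxB hy
      have hA'A : A' ⊆ A := Set.diff_subset
      have hkA' : A'.ncard ≤ k := le_trans (Set.ncard_le_ncard hA'A A.toFinite) hk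
      have hlt : (A' \ B).ncard ≤ d := by
        have heq : A' \ B = (A \ B) \ {x} := by
          rw [hA']; ext y; simp only [Set.mem_diff, Set.mem_singleton_iff]; tauto
        have := Set.ncard_diff_singleton_lt_of_mem hmem (A \ B).toFinite
        rw [heq]
        omega
      have htail : Tar G u v k A' B :=
        ih (fun h => hAu h.1) (fun h => hAv h.1) hBA' hkA' hlt
      have hsd : symmDiff A A' = {x} := by
        ext y
        simp only [Set.mem_symmDiff, hA', Set.mem_diff, Set.mem_singleton_iff]
        constructor
        · rintro (⟨hyA, hy⟩ | ⟨⟨hyA, hyx⟩, hyA'⟩)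
          · by_contra hyx; exact hy ⟨hyA, hyx⟩
          · exact absurd hyA hyA'
        · rintro rfl
          exact Or.inl ⟨hxA, fun h => h.2 rfl⟩
      have hstep : Tar G u v k A A' :=
        tar_single hA hk (isSep_superset hB hBA' (fun h => hAu h.1) (fun h => hAv h.1)) hkA'
          (by rw [hsd, Set.ncard_singleton])
      exact hstep.trans htail
    
private lemma tar_of_edge {X Y : Set V} (hX : MinSep G u v X) (hY : MinSep G u v Y)
    (hk : (X ∪ Y).ncard ≤ k) : Tar G u v k X Y := by
  have hu : u ∉ X ∪ Y := fun h => h.elim hX.1.1 hY.1.1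
  have hv : v ∉ X ∪ Y := fun h => h.elim hX.1.2.1 hY.1.2.1
  exact (tar_of_subset hX.1 hu hv Set.subset_union_left hk).symm.trans
    (tar_of_subset hY.1 hu hv Set.subset_union_right hk)

private lemma tar_of_rtg {X Y : Set V} (hX : IsSep G u v X) (hkX : X.ncard ≤ k)
    (hR : Relation.ReflTransGen
      (fun X Y => MinSep G u v X ∧ MinSep G u v Y ∧ (X ∪ Y).ncard ≤ k) X Y) :
    Tar G u v k X Y := by
  induction hR with
  | refl => exact tar_refl hX hkX
  | tail hbc e ih => exact ih.trans (tar_of_edge e.1 e.2.1 e.2.2)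

private lemma subset_or_subset {A B : Set V} (h : (symmDiff A B).ncard = 1) :
    A ⊆ B ∨ B ⊆ A := by
  by_contra hc
  push_neg at hc
  obtain ⟨a, haA, haB⟩ := Set.not_subset.mp hc.1
  obtain ⟨b, hbB, hbA⟩ := Set.not_subset.mp hc.2
  have hab : a ≠ b := fun h => haB (h ▸ hbB)
  have hsub : ({a, b} : Set V) ⊆ symmDiff A B := by
    intro x hx
    rcases hx with rfl | rfl
    · exact Set.mem_symmDiff.mpr (Or.inl ⟨haA, haB⟩)
    · exact Set.mem_symmDiff.mpr (Or.inr ⟨hbB, hbA⟩)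
  have := Set.ncard_le_ncard hsub (Set.toFinite _)
  rw [Set.ncard_pair hab] at this
  omega

end Aux

/-- There is a `k`-TAR reconfiguration sequence between the `uv`-separators
`Sa` and `Sb` iff some minimal separators `Sa' ⊆ Sa` and `Sb' ⊆ Sb` lie in the
same connected component of the graph `H` on minimal separators in which two
minimal separators are adjacent whenever their union has at most `k`
vertices. -/
theorem stmt10 {V : Type*} [Fintype V] (G : SimpleGraph V) (u v : V)
    (huv : ¬ G.Adj u v) (hune : u ≠ v) (k : ℕ) (Sa Sb : Set V)
    (hSa : IsSep G u v Sa) (hSb : IsSep G u v Sb)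
    (hka : Sa.ncard ≤ k) (hkb : Sb.ncard ≤ k) :
    (∃ (n : ℕ) (f : ℕ → Set V), f 0 = Sa ∧ f n = Sb ∧
        (∀ i ≤ n, IsSep G u v (f i) ∧ (f i).ncard ≤ k) ∧
        (∀ i < n, (symmDiff (f i) (f (i + 1))).ncard = 1)) ↔
    (∃ Sa' Sb' : Set V, Sa' ⊆ Sa ∧ Sb' ⊆ Sb ∧
        MinSep G u v Sa' ∧ MinSep G u v Sb' ∧
        Relation.ReflTransGen
          (fun X Y => MinSep G u v X ∧ MinSep G u v Y ∧ (X ∪ Y).ncard ≤ k)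
          Sa' Sb') := by
  constructor
  · rintro ⟨n, f, hf0, hfn, hfs, hfd⟩
    have key : ∀ i ≤ n, ∃ M, M ⊆ f i ∧ MinSep G u v M ∧ ∃ M0, M0 ⊆ f 0 ∧ MinSep G u v M0 ∧
        Relation.ReflTransGen
          (fun X Y => MinSep G u v X ∧ MinSep G u v Y ∧ (X ∪ Y).ncard ≤ k) M0 M := by
      intro i
      induction i with
      | zero =>
        intro _
        obtain ⟨M, hMs, hM⟩ := exists_minSep _ (hfs 0 (Nat.zero_le n)).1
        exact ⟨M, hMs, hM, M, hMs, hM, Relation.ReflTransGen.refl⟩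
      | succ i ih =>
        intro hi
        obtain ⟨M, hMs, hM, M0, hM0s, hM0, hR⟩ := ih (by omega)
        rcases subset_or_subset (hfd i (by omega)) with hsub | hsub
        · exact ⟨M, hMs.trans hsub, hM, M0, hM0s, hM0, hR⟩
        · obtain ⟨M', hM's, hM'⟩ := exists_minSep _ (hfs (i + 1) hi).1
          have hcard : (M ∪ M').ncard ≤ k := by
            refine le_trans (Set.ncard_le_ncard ?_ (Set.toFinite _)) (hfs i (by omega)).2
            exact Set.union_subset hMs (hM's.trans hsub)
          exact ⟨M', hM's, hM', M0, hM0s, hM0, hR.tail ⟨hM, hM', hcard⟩⟩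
    obtain ⟨M, hMs, hM, M0, hM0s, hM0, hR⟩ := key n le_rfl
    exact ⟨M0, M, hf0 ▸ hM0s, hfn ▸ hMs, hM0, hM, hR⟩
  · rintro ⟨Sa', Sb', hsa, hsb, hSa', hSb', hR⟩
    have hT : Tar G u v k Sa' Sb' :=
      tar_of_rtg hSa'.1 (le_trans (Set.ncard_le_ncard hsa Sa.toFinite) hka) hR
    have h1 : Tar G u v k Sa Sa' := tar_of_subset hSa'.1 hSa.1 hSa.2.1 hsa hka
    have h2 : Tar G u v k Sb' Sb := (tar_of_subset hSb'.1 hSb.1 hSb.2.1 hsb hkb).symm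
    exact (h1.trans hT).trans h2
end

section
/- If S_i and S_j are two minimal uv-separators of a graph G with |S_i ∪ S_j| ≤ k, then there is a k-TAR reconfiguration sequence from S_i to S_j: one can first add the vertices of S_j \ S_i one at a time and then remove the vertices of S_i \ S_j one at a time, with every intermediate set a uv-separator of size at most k. -/
lemma symmDiff_insert {V : Type*} (X : Set V) (a : V) (ha : a ∉ X) :
    (symmDiff X (insert a X)).ncard = 1 := by
  have : symmDiff X (insert a X) = {a} := by
    ext x
    simp only [symmDiff_def, Set.sup_eq_union, Set.mem_union, Set.mem_diff, Set.mem_insert_iff,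
      Set.mem_singleton_iff]
    constructor
    · rintro (⟨hx, h⟩ | ⟨(rfl | hx), h⟩) <;> tauto
    · rintro rfl; tauto
  rw [this, Set.ncard_singleton]

lemma chain_up {V : Type*} (Y : Set V) (hY : Y.Finite) :
    ∀ X : Set V, X ⊆ Y →
    ∃ (n : ℕ) (f : ℕ → Set V), f 0 = X ∧ f n = Y ∧ (∀ i, X ⊆ f i ∧ f i ⊆ Y) ∧
      (∀ i < n, (symmDiff (f i) (f (i + 1))).ncard = 1) := by
  suffices h : ∀ m : ℕ, ∀ X : Set V, X ⊆ Y → (Y \ X).ncard = m →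
      ∃ (n : ℕ) (f : ℕ → Set V), f 0 = X ∧ f n = Y ∧ (∀ i, X ⊆ f i ∧ f i ⊆ Y) ∧
        (∀ i < n, (symmDiff (f i) (f (i + 1))).ncard = 1) by
    intro X hXY; exact h _ X hXY rfl
  intro m
  induction m with
  | zero =>
    intro X hXY h
    have hfin : (Y \ X).Finite := hY.diff
    have : Y \ X = ∅ := (Set.ncard_eq_zero hfin).mp h
    have hXY' : X = Y := by
      apply Set.Subset.antisymm hXY
      intro y hy
      by_contra hyx
      exact absurd (this ▸ ⟨hy, hyx⟩) (Set.notMem_empty y)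
    exact ⟨0, fun _ => X, rfl, hXY', fun i => ⟨le_refl _, hXY'.le⟩, fun i hi => absurd hi (by omega)⟩
  | succ m ih =>
    intro X hXY h
    have hfin : (Y \ X).Finite := hY.diff
    have hne : (Y \ X).Nonempty := by
      rw [← Set.ncard_pos hfin] at *; omega
    obtain ⟨a, haY, haX⟩ := hne
    set X' := insert a X with hX'
    have hX'Y : X' ⊆ Y := Set.insert_subset haY hXY
    have hcard : (Y \ X').ncard = m := by
      have : Y \ X' = (Y \ X) \ {a} := by
        ext x; simp [hX', Set.mem_diff]; tauto
      rw [this, Set.ncard_diff_singleton_of_mem (show a ∈ Y \ X from ⟨haY, haX⟩)]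
      omega
    obtain ⟨n, f, hf0, hfn, hmem, hstep⟩ := ih X' hX'Y hcard
    refine ⟨n + 1, fun i => if i = 0 then X else f (i - 1), by simp, by simp [hfn], ?_, ?_⟩
    · intro i
      by_cases hi : i = 0
      · simp [hi, hXY]
      · simp only [if_neg hi]
        exact ⟨(Set.subset_insert a X).trans (hmem (i-1)).1, (hmem (i-1)).2⟩
    · intro i hi
      by_cases hi0 : i = 0
      · simp [hi0, hf0, hX', symmDiff_insert X a haX]
      · simp only [if_neg hi0, if_neg (by omega : ¬ i + 1 = 0), Nat.add_sub_cancel]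
        have := hstep (i - 1) (by omega)
        rwa [show i - 1 + 1 = i by omega] at this

/-- If `Si, Sj` are minimal `uv`-separators with `|Si ∪ Sj| ≤ k`, then there
is a `k`-TAR reconfiguration sequence from `Si` to `Sj`. -/
theorem stmt11 {V : Type*} [Fintype V] (G : SimpleGraph V) (u v : V)
    (huv : ¬ G.Adj u v) (k : ℕ) (Si Sj : Set V)
    (hSi : MinSep G u v Si) (hSj : MinSep G u v Sj)
    (hk : (Si ∪ Sj).ncard ≤ k) :
    ∃ (n : ℕ) (f : ℕ → Set V), f 0 = Si ∧ f n = Sj ∧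
      (∀ i ≤ n, IsSep G u v (f i) ∧ (f i).ncard ≤ k) ∧
      (∀ i < n, (symmDiff (f i) (f (i + 1))).ncard = 1) := by
  set U := Si ∪ Sj with hU
  have hUfin : U.Finite := Set.toFinite U
  obtain ⟨n1, f1, h10, h1n, h1mem, h1step⟩ := chain_up U hUfin Si Set.subset_union_left
  obtain ⟨n2, f2, h20, h2n, h2mem, h2step⟩ := chain_up U hUfin Sj Set.subset_union_right
  refine ⟨n1 + n2, fun i => if i ≤ n1 then f1 i else f2 (n1 + n2 - i), by simp [h10], ?_, ?_, ?_⟩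
  · show (if n1 + n2 ≤ n1 then f1 (n1 + n2) else f2 (n1 + n2 - (n1 + n2))) = Sj
    by_cases h : n2 = 0
    · rw [if_pos (by omega), h, add_zero, h1n, ← h2n, h]; exact h20
    · rw [if_neg (by omega), Nat.sub_self]; exact h20
  · -- separator & card
    have sep : ∀ S : Set V, Si ⊆ S ∨ Sj ⊆ S → S ⊆ U → IsSep G u v S ∧ S.ncard ≤ k := by
      intro S hsub hSU
      have hu : u ∉ S := fun h => by
        rcases hSU h with h' | h'
        exacts [hSi.1.1 h', hSj.1.1 h']
      have hv : v ∉ S := fun h => by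
        rcases hSU h with h' | h'
        exacts [hSi.1.2.1 h', hSj.1.2.1 h']
      refine ⟨⟨hu, hv, fun p => ?_⟩, le_trans (Set.ncard_le_ncard hSU hUfin) hk⟩
      rcases hsub with hsub | hsub
      · obtain ⟨w, hw, hwp⟩ := hSi.1.2.2 p; exact ⟨w, hsub hw, hwp⟩
      · obtain ⟨w, hw, hwp⟩ := hSj.1.2.2 p; exact ⟨w, hsub hw, hwp⟩
    intro i _
    by_cases h : i ≤ n1
    · simpa [h] using sep (f1 i) (Or.inl (h10 ▸ (h1mem i).1)) (h1mem i).2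
    · simpa [h] using sep (f2 (n1 + n2 - i)) (Or.inr (h20 ▸ (h2mem _).1)) (h2mem _).2
  · intro i hi
    rcases lt_trichotomy i n1 with h | h | h
    · simp only [if_pos h.le, if_pos (by omega : i + 1 ≤ n1)]
      exact h1step i h
    · subst h
      have hn2 : 0 < n2 := by omega
      simp only [le_refl, if_pos, if_neg (by omega : ¬ i + 1 ≤ i)]
      have : i + n2 - (i + 1) = n2 - 1 := by omega
      rw [this, h1n, ← h2n, symmDiff_comm]
      have := h2step (n2 - 1) (by omega)
      rwa [show n2 - 1 + 1 = n2 by omega] at this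
    · simp only [if_neg (by omega : ¬ i ≤ n1), if_neg (by omega : ¬ i + 1 ≤ n1)]
      rw [symmDiff_comm]
      have := h2step (n1 + n2 - (i + 1)) (by omega)
      rwa [show n1 + n2 - (i + 1) + 1 = n1 + n2 - i by omega] at this
end

section
/- Let G be a graph in which the vertex set is partitioned into two cliques Q₁ and Q₂ such that the set of edges between Q₁ and Q₂ forms a matching (each vertex of Q₁ has at most one neighbor in Q₂ and vice versa). Then G is {3P₁, diamond}-free: G contains no independent set of size 3 and no induced diamond. -/
/-- If the vertex set of `G` is partitioned into two cliques `Q₁, Q₂` such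
that the edges between them form a matching, then `G` is
`{3P₁, diamond}`-free. -/
theorem stmt15 {V : Type*} (G : SimpleGraph V) (Q₁ Q₂ : Set V)
    (hcover : Q₁ ∪ Q₂ = Set.univ) (hdisj : Disjoint Q₁ Q₂)
    (hc₁ : G.IsClique Q₁) (hc₂ : G.IsClique Q₂)
    (hm₁ : ∀ x ∈ Q₁, ∀ y ∈ Q₂, ∀ z ∈ Q₂, G.Adj x y → G.Adj x z → y = z)
    (hm₂ : ∀ x ∈ Q₂, ∀ y ∈ Q₁, ∀ z ∈ Q₁, G.Adj x y → G.Adj x z → y = z) :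
    ThreeP1Free G ∧ DiamondFree G := by
  have mem : ∀ x : V, x ∈ Q₁ ∨ x ∈ Q₂ := fun x => by
    have h := Set.mem_univ x
    rw [← hcover] at h
    exact h
  constructor
  · intro a b c hab hac hbc
    rcases mem a with ha | ha <;> rcases mem b with hb | hb <;>
      rcases mem c with hc | hc
    · exact Or.inl (hc₁ ha hb hab)
    · exact Or.inl (hc₁ ha hb hab)
    · exact Or.inr (Or.inl (hc₁ ha hc hac))
    · exact Or.inr (Or.inr (hc₂ hb hc hbc))
    · exact Or.inr (Or.inr (hc₁ hb hc hbc))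
    · exact Or.inr (Or.inl (hc₂ ha hc hac))
    · exact Or.inl (hc₂ ha hb hab)
    · exact Or.inl (hc₂ ha hb hab)
  · rintro ⟨a, b, c, d, hab, hac, had, hbc, hbd, hcd, Aab, Aac, Aad, Abc, Abd, nAcd⟩
    rcases mem c with hc | hc <;> rcases mem d with hd | hd
    · exact nAcd (hc₁ hc hd hcd)
    · rcases mem a with ha | ha <;> rcases mem b with hb | hb
      · exact hab (hm₂ d hd a ha b hb Aad.symm Abd.symm)
      · exact hbd (hm₁ a ha b hb d hd Aab Aad)
      · exact had (hm₁ b hb a ha d hd Aab.symm Abd)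
      · exact hab (hm₁ c hc a ha b hb Aac.symm Abc.symm)
    · rcases mem a with ha | ha <;> rcases mem b with hb | hb
      · exact hab (hm₂ c hc a ha b hb Aac.symm Abc.symm)
      · exact had (hm₂ b hb a ha d hd Aab.symm Abd)
      · exact hbd (hm₂ a ha b hb d hd Aab Aad)
      · exact hab (hm₁ d hd a ha b hb Aad.symm Abd.symm)
    · exact nAcd (hc₂ hc hd hcd)
end

section
/- Let G be a bipartite graph with parts A and B containing vertices u ∈ B and v ∈ A such that N(u) = A \ {v} and N(v) = B \ {u} (a peanut-like bipartite graph with foci u, v). Then u and v are non-adjacent, and the maximum independent sets of G − {u,v} are in bijection with the minimum uv-separators of G via I ↦ V(G − {u,v}) \ I. -/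
/-- In a peanut-like bipartite graph with foci `u ∈ B`, `v ∈ A`
(`N(u) = A \ {v}`, `N(v) = B \ {u}`), the foci are non-adjacent, and a set
`I ⊆ V \ {u,v}` is a maximum independent set of `G − {u,v}` iff its complement
`(V \ {u,v}) \ I` is a minimum `uv`-separator of `G`. -/
theorem stmt18 {V : Type*} [Fintype V] (G : SimpleGraph V) (A B : Set V)
    (u v : V) (hdisj : Disjoint A B) (hcover : A ∪ B = Set.univ)
    (hbip : ∀ x y : V, G.Adj x y → (x ∈ A ∧ y ∈ B) ∨ (x ∈ B ∧ y ∈ A))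
    (hu : u ∈ B) (hv : v ∈ A)
    (hNu : G.neighborSet u = A \ {v}) (hNv : G.neighborSet v = B \ {u}) :
    ¬ G.Adj u v ∧
    ∀ I : Set V, I ⊆ Set.univ \ {u, v} →
      ((IsIndep G I ∧
          ∀ J : Set V, J ⊆ Set.univ \ {u, v} → IsIndep G J → J.ncard ≤ I.ncard) ↔
        (IsSep G u v ((Set.univ \ {u, v}) \ I) ∧
          ∀ T : Set V, IsSep G u v T →
            ((Set.univ \ {u, v}) \ I).ncard ≤ T.ncard)) := by
  have huv : u ≠ v := fun h => Set.disjoint_left.mp hdisj hv (h ▸ hu)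
  have hnadj : ¬ G.Adj u v := by
    intro h
    have hmem : v ∈ G.neighborSet u := h
    rw [hNu] at hmem
    exact hmem.2 rfl
  -- key lemma: every walk from u to v contains an edge avoiding {u, v}
  have key : ∀ (n : ℕ) (w : V) (p : G.Walk w v), p.length = n → (w = u ∨ (w ∈ A ∧ w ≠ v)) →
      ∃ x y, s(x, y) ∈ p.edges ∧ x ∉ ({u, v} : Set V) ∧ y ∉ ({u, v} : Set V) := by
    intro n
    induction n using Nat.strong_induction_on with
    | _ n ih =>
      intro w p hlen hw
      cases p with
      | nil =>
        rcases hw with h | ⟨_, hne⟩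
        · exact absurd h.symm huv
        · exact absurd rfl hne
      | @cons _ b _ hadj q =>
        rw [SimpleGraph.Walk.length_cons] at hlen
        rcases hw with rfl | ⟨hwA, hwv⟩
        · -- start at u
          have hb : b ∈ G.neighborSet w := hadj
          rw [hNu] at hb
          obtain ⟨x, y, hmem, hx, hy⟩ :=
            ih q.length (by omega) b q rfl (Or.inr ⟨hb.1, hb.2⟩)
          exact ⟨x, y, by simp [hmem], hx, hy⟩
        · -- start at w ∈ A \ {v}
          have hbB : b ∈ B := by
            rcases hbip w b hadj with ⟨_, h⟩ | ⟨h, _⟩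
            · exact h
            · exact absurd h (Set.disjoint_left.mp hdisj hwA)
          by_cases hbu : b = u
          · subst hbu
            obtain ⟨x, y, hmem, hx, hy⟩ := ih q.length (by omega) _ q rfl (Or.inl rfl)
            exact ⟨x, y, by simp [hmem], hx, hy⟩
          · refine ⟨w, b, by simp, ?_, ?_⟩
            · simp only [Set.mem_insert_iff, Set.mem_singleton_iff]
              push_neg
              exact ⟨fun h => Set.disjoint_left.mp hdisj hwA (h ▸ hu), hwv⟩
            · simp only [Set.mem_insert_iff, Set.mem_singleton_iff]
              push_neg
              exact ⟨hbu, fun h => Set.disjoint_left.mp hdisj hv (h ▸ hbB)⟩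
  have sep_of_indep : ∀ I : Set V, I ⊆ Set.univ \ {u, v} → IsIndep G I →
      IsSep G u v ((Set.univ \ {u, v}) \ I) := by
    intro I hI hind
    refine ⟨by simp, by simp, ?_⟩
    intro p
    obtain ⟨x, y, he, hx, hy⟩ := key p.length u p rfl (Or.inl rfl)
    by_cases hxI : x ∈ I
    · by_cases hyI : y ∈ I
      · exact absurd (p.adj_of_mem_edges he) (hind x hxI y hyI)
      · exact ⟨y, ⟨⟨trivial, hy⟩, hyI⟩, p.snd_mem_support_of_mem_edges he⟩
    · exact ⟨x, ⟨⟨trivial, hx⟩, hxI⟩, p.fst_mem_support_of_mem_edges he⟩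
  have indep_of_sep : ∀ T : Set V, IsSep G u v T →
      IsIndep G ((Set.univ \ {u, v}) \ T) := by
    intro T hT
    have claim : ∀ x y, x ∈ (Set.univ \ {u, v}) \ T → y ∈ (Set.univ \ {u, v}) \ T →
        G.Adj x y → x ∈ A → y ∈ B → False := by
      intro x y hx hy hadj hxA hyB
      have hxv : x ≠ v := fun h => hx.1.2 (by simp [h])
      have hyu : y ≠ u := fun h => hy.1.2 (by simp [h])
      have hux : G.Adj u x := by
        have : x ∈ G.neighborSet u := by rw [hNu]; exact ⟨hxA, hxv⟩
        exact this
      have hyv : G.Adj y v := by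
        have : y ∈ G.neighborSet v := by rw [hNv]; exact ⟨hyB, hyu⟩
        exact this.symm
      obtain ⟨w, hwT, hwsup⟩ := hT.2.2
        (SimpleGraph.Walk.cons hux (SimpleGraph.Walk.cons hadj (hyv.toWalk)))
      simp only [SimpleGraph.Walk.support_cons, List.mem_cons,
        SimpleGraph.Walk.support_nil, List.mem_singleton] at hwsup
      rcases hwsup with rfl | rfl | rfl | rfl | h
      · exact hT.1 hwT
      · exact hx.2 hwT
      · exact hy.2 hwT
      · exact hT.2.1 hwT
      · exact absurd h List.not_mem_nil
    intro x hx y hy hadj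
    rcases hbip x y hadj with ⟨hxA, hyB⟩ | ⟨hxB, hyA⟩
    · exact claim x y hx hy hadj hxA hyB
    · exact claim y x hy hx hadj.symm hyA hxB
  have hcard : ∀ I : Set V, I ⊆ Set.univ \ {u, v} →
      ((Set.univ \ {u, v}) \ I).ncard + I.ncard = (Set.univ \ {u, v} : Set V).ncard :=
    fun I hI => Set.ncard_diff_add_ncard_of_subset hI (Set.toFinite _)
  refine ⟨hnadj, ?_⟩
  intro I hI
  constructor
  · rintro ⟨hind, hmax⟩
    refine ⟨sep_of_indep I hI hind, ?_⟩
    intro T hT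
    have hTsub : T ⊆ Set.univ \ {u, v} := by
      intro x hx
      refine ⟨trivial, ?_⟩
      rintro (rfl | rfl)
      · exact hT.1 hx
      · exact hT.2.1 hx
    have hJ := hmax ((Set.univ \ {u, v}) \ T) Set.diff_subset (indep_of_sep T hT)
    have h1 := hcard I hI
    have h2 := hcard T hTsub
    have h3 := hcard ((Set.univ \ {u, v}) \ T) Set.diff_subset
    rw [Set.diff_diff_cancel_left hTsub] at h3
    omega
  · rintro ⟨hsep, hmin⟩
    have hIind : IsIndep G I := by
      have := indep_of_sep ((Set.univ \ {u, v}) \ I) hsep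
      rwa [Set.diff_diff_cancel_left hI] at this
    refine ⟨hIind, ?_⟩
    intro J hJ hJind
    have := hmin ((Set.univ \ {u, v}) \ J) (sep_of_indep J hJ hJind)
    have h1 := hcard I hI
    have h2 := hcard J hJ
    omega
end
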